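/- For 0 ≤ α < 1 and n ≥ 1, the function ω(x) = |x|^{−nα} on ℝⁿ is an A₁ weight: there is a constant C = C(n,α) such that for every x ∈ ℝⁿ and r > 0, (1/|B(x,r)|) ∫_{B(x,r)} |y|^{−nα} dy ≤ C |x|^{−nα}. -/

import Mathlib

open Metric MeasureTheory

open Set in
private lemma aux_ball (n : ℕ) (hn : 1 ≤ n) {s : ℝ} (hs0 : 0 ≤ s) (hsn : s < n)
    {R : ℝ} (hR : 0 < R) :
    ∫⁻ y in ball (0 : EuclideanSpace ℝ (Fin n)) R, ENNReal.ofReal (‖y‖ ^ (-s)) ≤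
      ENNReal.ofReal (((n : ℝ) / ((n : ℝ) - s)) * R ^ (-s)) *
        volume (ball (0 : EuclideanSpace ℝ (Fin n)) R) := by
  haveI : Nonempty (Fin n) := ⟨⟨0, hn⟩⟩
  have hn0 : (0 : ℝ) < n := by exact_mod_cast hn
  have hns : (0 : ℝ) < (n : ℝ) - s := by linarith
  rcases hs0.eq_or_lt with rfl | hs
  · simp only [neg_zero, Real.rpow_zero, ENNReal.ofReal_one, lintegral_one,
      Measure.restrict_apply_univ, mul_one, sub_zero, div_self hn0.ne', one_mul]
    exact le_rfl
  -- now 0 < s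
  set μ := volume.restrict (ball (0 : EuclideanSpace ℝ (Fin n)) R) with hμ
  have f_mble : AEMeasurable (fun y : EuclideanSpace ℝ (Fin n) => ‖y‖ ^ (-s)) μ :=
    (Measurable.pow measurable_norm measurable_const).aemeasurable
  have key := lintegral_eq_lintegral_meas_lt μ
      (Filter.Eventually.of_forall fun y => Real.rpow_nonneg (norm_nonneg y) _) f_mble
  rw [show (∫⁻ y in ball (0 : EuclideanSpace ℝ (Fin n)) R, ENNReal.ofReal (‖y‖ ^ (-s)))
      = ∫⁻ y, ENNReal.ofReal (‖y‖ ^ (-s)) ∂μ from rfl, key]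
  set a := R ^ (-s) with ha_def
  have ha : 0 < a := Real.rpow_pos_of_pos hR _
  rw [show Ioi (0:ℝ) = Ioc 0 a ∪ Ioi a from (Ioc_union_Ioi_eq_Ioi ha.le).symm,
    lintegral_union measurableSet_Ioi (Ioc_disjoint_Ioi le_rfl)]
  set v1 := volume (ball (0 : EuclideanSpace ℝ (Fin n)) 1) with hv1
  have hvR : volume (ball (0 : EuclideanSpace ℝ (Fin n)) R)
      = ENNReal.ofReal (R ^ n) * v1 := by
    rw [Measure.addHaar_ball _ _ hR.le, finrank_euclideanSpace_fin]
  -- first piece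
  have h1 : (∫⁻ t in Ioc (0:ℝ) a, μ {y | t < ‖y‖ ^ (-s)}) ≤
      ENNReal.ofReal (a * R ^ n) * v1 := by
    calc (∫⁻ t in Ioc (0:ℝ) a, μ {y | t < ‖y‖ ^ (-s)})
        ≤ ∫⁻ _ in Ioc (0:ℝ) a, volume (ball (0 : EuclideanSpace ℝ (Fin n)) R) := by
          refine setLIntegral_mono measurable_const fun t ht => ?_
          exact (measure_mono (subset_univ _)).trans_eq (by simp [hμ])
      _ = volume (ball (0 : EuclideanSpace ℝ (Fin n)) R) * volume (Ioc (0:ℝ) a) :=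
          setLIntegral_const _ _
      _ = ENNReal.ofReal (a * R ^ n) * v1 := by
          rw [hvR, Real.volume_Ioc, sub_zero, ENNReal.ofReal_mul ha.le]
          ring
  -- second piece
  set p : ℝ := -((n : ℝ) / s) with hp_def
  have hp : p < -1 := by
    rw [hp_def, neg_lt_neg_iff]
    exact (one_lt_div hs).2 hsn
  have h2 : (∫⁻ t in Ioi a, μ {y | t < ‖y‖ ^ (-s)}) ≤
      ENNReal.ofReal (-a ^ (p + 1) / (p + 1)) * v1 := by
    have hbound : ∀ t ∈ Ioi a, μ {y | t < ‖y‖ ^ (-s)} ≤ ENNReal.ofReal (t ^ p) * v1 := by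
      intro t ht
      have ht0 : 0 < t := ha.trans ht
      have hsub : {y : EuclideanSpace ℝ (Fin n) | t < ‖y‖ ^ (-s)} ⊆
          ball 0 (t ^ (-1/s)) := by
        intro y hy
        simp only [mem_setOf_eq] at hy
        rw [mem_ball, dist_zero_right]
        rcases eq_or_ne y 0 with rfl | hy0
        · simpa using Real.rpow_pos_of_pos ht0 _
        · have hy0' : 0 < ‖y‖ := norm_pos_iff.2 hy0
          by_contra hcon
          push_neg at hcon
          have : ‖y‖ ^ (-s) ≤ (t ^ (-1/s)) ^ (-s) :=
            Real.rpow_le_rpow_of_nonpos (Real.rpow_pos_of_pos ht0 _) hcon (by linarith)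
          rw [← Real.rpow_mul ht0.le] at this
          have hts : -1/s * -s = 1 := by field_simp
          rw [hts, Real.rpow_one] at this
          linarith
      calc μ {y | t < ‖y‖ ^ (-s)} ≤ volume (ball (0 : EuclideanSpace ℝ (Fin n)) (t ^ (-1/s))) :=
            le_trans (le_trans (Measure.restrict_le_self _) (measure_mono hsub)) le_rfl
        _ = ENNReal.ofReal ((t ^ (-1/s)) ^ n) * v1 :=
            by rw [Measure.addHaar_ball _ _ (Real.rpow_pos_of_pos ht0 _).le,
              finrank_euclideanSpace_fin]
        _ = ENNReal.ofReal (t ^ p) * v1 := by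
            rw [← Real.rpow_natCast (t ^ (-1/s)) n, ← Real.rpow_mul ht0.le]
            congr 2
            rw [hp_def]; field_simp
    calc (∫⁻ t in Ioi a, μ {y | t < ‖y‖ ^ (-s)})
        ≤ ∫⁻ t in Ioi a, ENNReal.ofReal (t ^ p) * v1 := setLIntegral_mono
          ((Measurable.pow measurable_id measurable_const).ennreal_ofReal.mul_const _) hbound
      _ = (∫⁻ t in Ioi a, ENNReal.ofReal (t ^ p)) * v1 := lintegral_mul_const _
          (Measurable.pow measurable_id measurable_const).ennreal_ofReal
      _ = ENNReal.ofReal (∫ t in Ioi a, t ^ p) * v1 := by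
          rw [← ofReal_integral_eq_lintegral_ofReal (integrableOn_Ioi_rpow_of_lt hp ha)]
          filter_upwards [ae_restrict_mem measurableSet_Ioi] with t ht
          exact Real.rpow_nonneg (ha.trans ht).le _
      _ = ENNReal.ofReal (-a ^ (p + 1) / (p + 1)) * v1 := by
          rw [integral_Ioi_rpow_of_lt hp ha]
  refine le_trans (add_le_add h1 h2) ?_
  rw [hvR, ← mul_assoc, ← ENNReal.ofReal_mul (by positivity), ← add_mul, ← ENNReal.ofReal_add]
  · apply mul_le_mul_left
    apply ENNReal.ofReal_le_ofReal
    -- real computation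
    have hap : a ^ (p + 1) = R ^ ((n : ℝ) - s) := by
      rw [ha_def, ← Real.rpow_mul hR.le]
      congr 1
      rw [hp_def]; field_simp; ring
    have haR : a * R ^ n = R ^ ((n : ℝ) - s) := by
      rw [ha_def, ← Real.rpow_natCast R n, ← Real.rpow_add hR]
      congr 1; ring
    rw [hap, haR, mul_assoc, haR]
    set b := R ^ ((n : ℝ) - s) with hb_def
    have hb : 0 < b := Real.rpow_pos_of_pos hR _
    have hsn' : s - (n:ℝ) ≠ 0 := by linarith
    have hp1 : p + 1 = (s - (n:ℝ)) / s := by rw [hp_def]; field_simp; ring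
    rw [hp1]
    have e1 : -b / ((s - (n:ℝ)) / s) = b * s / ((n:ℝ) - s) := by
      rw [div_div_eq_mul_div, div_eq_div_iff hsn' (by linarith : (n:ℝ) - s ≠ 0)]
      ring
    rw [e1]
    have e2 : b + b * s / ((n:ℝ) - s) = (n:ℝ) / ((n:ℝ) - s) * b := by
      field_simp
      ring
    rw [e2]
  · exact mul_nonneg ha.le (by positivity)
  · have hp1' : p + 1 < 0 := by linarith
    have hpos : 0 < a ^ (p + 1) := Real.rpow_pos_of_pos ha _
    exact div_nonneg_of_nonpos (by linarith) hp1'.le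

/-- For `0 ≤ α < 1` and `n ≥ 1`, `|x|^{−nα}` is an `A₁` weight on `ℝⁿ`: there is
`C = C(n, α)` with `(1/|B(x,r)|) ∫_{B(x,r)} |y|^{−nα} dy ≤ C |x|^{−nα}` for all
`x ≠ 0` and `r > 0`. -/
theorem stmt8 (n : ℕ) (hn : 1 ≤ n) (α : ℝ) (hα0 : 0 ≤ α) (hα1 : α < 1) :
    ∃ C : ℝ, 0 < C ∧ ∀ x : EuclideanSpace ℝ (Fin n), x ≠ 0 → ∀ r : ℝ, 0 < r →
      ∫⁻ y in Metric.ball x r, ENNReal.ofReal (‖y‖ ^ (-((n : ℝ) * α))) ≤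
        ENNReal.ofReal (C * ‖x‖ ^ (-((n : ℝ) * α))) * volume (Metric.ball x r) := by
  haveI : Nonempty (Fin n) := ⟨⟨0, hn⟩⟩
  have hn0 : (0 : ℝ) < n := by exact_mod_cast hn
  set s : ℝ := (n : ℝ) * α with hs_def
  have hs0 : 0 ≤ s := mul_nonneg hn0.le hα0
  have hsn : s < n := by
    calc s = (n:ℝ) * α := rfl
    _ < (n:ℝ) * 1 := by exact mul_lt_mul_of_pos_left hα1 hn0
    _ = (n:ℝ) := mul_one _
  have hns : (0 : ℝ) < (n : ℝ) - s := by linarith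
  have hdiv1 : (1:ℝ) ≤ (n:ℝ) / ((n:ℝ) - s) := (one_le_div hns).2 (by linarith)
  have h2s : (0:ℝ) < 2 ^ s := Real.rpow_pos_of_pos two_pos s
  have h3n : (0:ℝ) < 3 ^ n := by positivity
  refine ⟨(n:ℝ) / ((n:ℝ) - s) * 3 ^ n * 2 ^ s, by positivity, ?_⟩
  intro x hx r hr
  have hx0 : 0 < ‖x‖ := norm_pos_iff.2 hx
  have hxs : 0 < ‖x‖ ^ (-s) := Real.rpow_pos_of_pos hx0 _
  rcases le_or_gt (2 * r) ‖x‖ with hcase | hcase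
  · -- far from the origin
    have hpt : ∀ y ∈ ball x r, ‖y‖ ^ (-s) ≤ 2 ^ s * ‖x‖ ^ (-s) := by
      intro y hy
      have hd : ‖x‖ - ‖y‖ ≤ dist x y := by
        rw [dist_eq_norm]; exact norm_sub_norm_le x y
      rw [mem_ball, dist_comm] at hy
      have hy2 : ‖x‖ / 2 ≤ ‖y‖ := by linarith
      have h1 : ‖y‖ ^ (-s) ≤ (‖x‖ / 2) ^ (-s) :=
        Real.rpow_le_rpow_of_nonpos (by linarith) hy2 (by linarith)
      have h2 : (‖x‖ / 2) ^ (-s) = 2 ^ s * ‖x‖ ^ (-s) := by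
        rw [Real.div_rpow hx0.le (by norm_num), Real.rpow_neg (by norm_num : (0:ℝ) ≤ 2)]
        field_simp
      linarith [h1, h2.le, h2.ge]
    calc ∫⁻ y in ball x r, ENNReal.ofReal (‖y‖ ^ (-s))
        ≤ ∫⁻ _ in ball x r, ENNReal.ofReal (2 ^ s * ‖x‖ ^ (-s)) :=
          setLIntegral_mono measurable_const fun y hy =>
            ENNReal.ofReal_le_ofReal (hpt y hy)
      _ = ENNReal.ofReal (2 ^ s * ‖x‖ ^ (-s)) * volume (ball x r) := setLIntegral_const _ _
      _ ≤ ENNReal.ofReal ((n:ℝ) / ((n:ℝ) - s) * 3 ^ n * 2 ^ s * ‖x‖ ^ (-s)) *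
            volume (ball x r) := by
          apply mul_le_mul_left
          apply ENNReal.ofReal_le_ofReal
          apply mul_le_mul_of_nonneg_right _ hxs.le
          have h3n1 : (1:ℝ) ≤ 3 ^ n := one_le_pow₀ (by norm_num)
          have hC1 : (1:ℝ) ≤ (n:ℝ) / ((n:ℝ) - s) * 3 ^ n := by nlinarith
          nlinarith [mul_le_mul_of_nonneg_right hC1 h2s.le]
  · -- close to the origin
    have hsub : ball x r ⊆ ball (0 : EuclideanSpace ℝ (Fin n)) (3 * r) := by
      intro y hy
      rw [mem_ball, dist_zero_right]
      rw [mem_ball, dist_eq_norm] at hy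
      have : ‖y‖ ≤ ‖y - x‖ + ‖x‖ := by
        calc ‖y‖ = ‖y - x + x‖ := by rw [sub_add_cancel]
        _ ≤ ‖y - x‖ + ‖x‖ := norm_add_le _ _
      linarith
    have key := aux_ball n hn hs0 hsn (show (0:ℝ) < 3 * r by linarith)
    have step1 : ∫⁻ y in ball x r, ENNReal.ofReal (‖y‖ ^ (-s)) ≤
        ∫⁻ y in ball (0 : EuclideanSpace ℝ (Fin n)) (3 * r),
          ENNReal.ofReal (‖y‖ ^ (-s)) :=
      lintegral_mono' (Measure.restrict_mono hsub le_rfl) le_rfl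
    have hvol3 : volume (ball (0 : EuclideanSpace ℝ (Fin n)) (3 * r)) =
        ENNReal.ofReal (3 ^ n) * volume (ball x r) := by
      rw [Measure.addHaar_ball _ _ (by linarith : (0:ℝ) ≤ 3 * r),
        Measure.addHaar_ball _ _ hr.le, finrank_euclideanSpace_fin, ← mul_assoc,
        ← ENNReal.ofReal_mul (by positivity), mul_pow]
    refine le_trans (le_trans step1 key) ?_
    rw [hvol3, ← mul_assoc, ← ENNReal.ofReal_mul (by positivity)]
    apply mul_le_mul_left
    apply ENNReal.ofReal_le_ofReal
    -- real inequality
    have hA : (3 * r) ^ (-s) ≤ r ^ (-s) :=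
      Real.rpow_le_rpow_of_nonpos hr (by linarith) (by linarith)
    have hB : (2 * r) ^ (-s) ≤ ‖x‖ ^ (-s) :=
      Real.rpow_le_rpow_of_nonpos hx0 hcase.le (by linarith)
    have hB' : (2 * r) ^ (-s) = 2 ^ (-s) * r ^ (-s) :=
      Real.mul_rpow (by norm_num) hr.le
    have h2inv : (2:ℝ) ^ (-s) = (2 ^ s)⁻¹ := Real.rpow_neg (by norm_num) s
    have hrs : r ^ (-s) ≤ 2 ^ s * ‖x‖ ^ (-s) := by
      rw [hB', h2inv] at hB
      calc r ^ (-s) = 2 ^ s * ((2 ^ s)⁻¹ * r ^ (-s)) := by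
            field_simp
        _ ≤ 2 ^ s * ‖x‖ ^ (-s) := by
            exact mul_le_mul_of_nonneg_left hB h2s.le
    have hrs0 : 0 < r ^ (-s) := Real.rpow_pos_of_pos hr _
    calc (n:ℝ) / ((n:ℝ) - s) * (3 * r) ^ (-s) * 3 ^ n
        ≤ (n:ℝ) / ((n:ℝ) - s) * (2 ^ s * ‖x‖ ^ (-s)) * 3 ^ n := by
          apply mul_le_mul_of_nonneg_right _ h3n.le
          exact mul_le_mul_of_nonneg_left (hA.trans hrs) (by positivity)
      _ = (n:ℝ) / ((n:ℝ) - s) * 3 ^ n * 2 ^ s * ‖x‖ ^ (-s) := by ring
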